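/- Avis–Fukuda bound: between any two non-crossing spanning trees on n ≥ 3 points in convex position there is a flip sequence of length at most 2n − 4. -/

import Mathlib

open Finset

/-- An edge (chord) on `n` points in convex position, as an unordered pair of indices. -/
abbrev Edge (n : ℕ) := Sym2 (Fin n)

/-- The cyclic successor of a point. -/
def next {n : ℕ} (i : Fin n) : Fin n := ⟨((i : ℕ) + 1) % n, Nat.mod_lt _ i.pos⟩


/-- Chords `{a,b}` (with `a<b`) and `{c,d}` (with `c<d`) cross iff
`a<c<b<d` or `c<a<d<b`. -/
def Cross {n : ℕ} (e f : Edge n) : Prop :=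
  ∃ a b c d : Fin n, e = s(a, b) ∧ f = s(c, d) ∧ a < b ∧ c < d ∧
    ((a < c ∧ c < b ∧ b < d) ∨ (c < a ∧ a < d ∧ d < b))

/-- A set of chords is non-crossing if no two of its chords cross. -/
def NonCrossing {n : ℕ} (E : Finset (Edge n)) : Prop :=
  ∀ e ∈ E, ∀ f ∈ E, ¬ Cross e f

/-- A border edge joins two cyclically consecutive points (this includes `{n-1, 0}`,
i.e. `{v_n, v_1}`, since addition in `Fin n` wraps around). -/
def IsBorder {n : ℕ} (e : Edge n) : Prop := ∃ i : Fin n, e = s(i, next i)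

/-- A spanning tree on the `n` points, given by its edge set: loopless, connected,
with `n - 1` edges. -/
def IsSpanningTree {n : ℕ} (T : Finset (Edge n)) : Prop :=
  (SimpleGraph.fromEdgeSet (T : Set (Edge n))).Connected ∧
    T.card = n - 1 ∧ ∀ e ∈ T, ¬ e.IsDiag

/-- A non-crossing spanning tree. -/
def NCST {n : ℕ} (T : Finset (Edge n)) : Prop := IsSpanningTree T ∧ NonCrossing T

/-- A flip removes one edge and adds another so that the result is again a
non-crossing spanning tree. -/
def Flip {n : ℕ} (T T' : Finset (Edge n)) : Prop :=
  NCST T ∧ NCST T' ∧ ∃ e ∈ T, ∃ f, f ∉ T ∧ T' = insert f (T.erase e)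

/-- A flip sequence of length `k` from `T₁` to `T₂`. -/
def FlipSeq {n : ℕ} (T₁ T₂ : Finset (Edge n)) (k : ℕ) : Prop :=
  ∃ f : ℕ → Finset (Edge n), f 0 = T₁ ∧ f k = T₂ ∧ ∀ i < k, Flip (f i) (f (i + 1))

/-- There is a flip sequence from `T₁` to `T₂` of length at most `m`. -/
def FlipDistLE {n : ℕ} (T₁ T₂ : Finset (Edge n)) (m : ℕ) : Prop :=
  ∃ k ≤ m, FlipSeq T₁ T₂ k

section AF

variable {n : ℕ}
variable [NeZero n]

lemma cross_symm {e f : Edge n} (h : Cross e f) : Cross f e := by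
  obtain ⟨a, b, c, d, he, hf, hab, hcd, hor⟩ := h
  exact ⟨c, d, a, b, hf, he, hcd, hab, hor.symm⟩

/-- `e` spans over `b` : `e = {c,d}` with `0 < c < b < d`. -/
def Spans (e : Edge n) (b : Fin n) : Prop :=
  ∃ c d : Fin n, e = s(c, d) ∧ 0 < c ∧ c < b ∧ b < d

lemma cross_zero {b : Fin n} (hb : 0 < b) {f : Edge n}
    (h : Cross (s((0 : Fin n), b)) f) : Spans f b := by
  obtain ⟨a, b', c, d, he, hf, hab, hcd, hor⟩ := h
  rcases Sym2.eq_iff.mp he with ⟨ha, hb'⟩ | ⟨ha, hb'⟩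
  · subst ha; subst hb'
    rcases hor with ⟨h1, h2, h3⟩ | ⟨h1, _, _⟩
    · exact ⟨c, d, hf, h1, h2, h3⟩
    · exact absurd h1 (not_lt.mpr (Fin.zero_le c))
  · subst hb'
    exact absurd hab (by subst ha; exact not_lt.mpr (Fin.zero_le _))

lemma not_spans_zero {b v : Fin n} : ¬ Spans (s((0 : Fin n), v)) b := by
  rintro ⟨c, d, he, hc, hcb, hbd⟩
  rcases Sym2.eq_iff.mp he with ⟨h1, h2⟩ | ⟨h1, h2⟩
  · exact absurd (h1 ▸ hc) (lt_irrefl _)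
  · subst h2; exact absurd hbd (by rw [← h1]; exact not_lt.mpr (Fin.zero_le _))

/-- If every edge of `S` has endpoints reachable in `G'`, connectivity of
`fromEdgeSet S` transfers to `G'`. -/
lemma connected_of_edges {S : Finset (Edge n)} {G' : SimpleGraph (Fin n)}
    (hS : (SimpleGraph.fromEdgeSet (S : Set (Edge n))).Connected)
    (h : ∀ a b : Fin n, s(a, b) ∈ S → a ≠ b → G'.Reachable a b) : G'.Connected := by
  have hne : Nonempty (Fin n) := hS.nonempty
  rw [SimpleGraph.connected_iff]
  refine ⟨fun x y => ?_, hne⟩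
  obtain ⟨w⟩ := hS.preconnected x y
  induction w with
  | nil => exact SimpleGraph.Reachable.refl _
  | cons hadj w ih =>
    rw [SimpleGraph.fromEdgeSet_adj] at hadj
    exact (h _ _ (by exact_mod_cast hadj.1) hadj.2).trans ih

lemma card_ge_of_connected : ∀ (k : ℕ) (S : Finset (Edge n)), S.card ≤ k →
    (SimpleGraph.fromEdgeSet (S : Set (Edge n))).Connected → n - 1 ≤ S.card := by
  intro k
  induction k with
  | zero =>
    intro S hcard hconn
    rcases le_or_gt n 1 with h | h
    · omega
    · exfalso
      obtain ⟨w⟩ := hconn.preconnected ⟨0, by omega⟩ ⟨1, by omega⟩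
      cases w with
      | cons hadj _ =>
        rw [SimpleGraph.fromEdgeSet_adj] at hadj
        have := hadj.1
        simp only [Finset.card_eq_zero.mp (Nat.le_zero.mp hcard)] at this
        simpa using this
  | succ k ih =>
    intro S hcard hconn
    classical
    set G := SimpleGraph.fromEdgeSet (S : Set (Edge n)) with hG
    by_cases hb : ∀ e ∈ G.edgeSet, G.IsBridge e
    · -- acyclic, hence a tree
      have hac : G.IsAcyclic := SimpleGraph.isAcyclic_iff_forall_edge_isBridge.mpr hb
      have htree : G.IsTree := ⟨hconn, hac⟩
      haveI : Fintype G.edgeSet := Fintype.ofFinite _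
      have hcardE := htree.card_edgeFinset
      have hsub : G.edgeFinset ⊆ S := by
        intro e he
        rw [SimpleGraph.mem_edgeFinset, hG, SimpleGraph.edgeSet_fromEdgeSet] at he
        exact_mod_cast he.1
      have := Finset.card_le_card hsub
      simp only [Fintype.card_fin] at hcardE
      omega
    · push_neg at hb
      obtain ⟨e, heE, hbr⟩ := hb
      have hdiag : ¬ e.IsDiag := by
        rw [hG, SimpleGraph.edgeSet_fromEdgeSet] at heE
        exact heE.2
      obtain ⟨u, v, hne, rfl⟩ : ∃ u v : Fin n, u ≠ v ∧ e = s(u, v) := by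
        induction e using Sym2.ind with
        | _ x y => exact ⟨x, y, fun h => hdiag (by simp [h]), rfl⟩
      have hadj : G.Adj u v := heE
      have hreach : (G \ SimpleGraph.fromEdgeSet {s(u, v)}).Reachable u v := by
        by_contra hcon
        exact hbr (SimpleGraph.isBridge_iff.mpr hcon)
      obtain ⟨p, hp⟩ := SimpleGraph.reachable_delete_edges_iff_exists_walk.mp hreach
      have heS : s(u, v) ∈ S := by
        rw [hG, SimpleGraph.edgeSet_fromEdgeSet] at heE
        exact_mod_cast heE.1
      -- walk transfers to the erased graph
      have hreach' : (SimpleGraph.fromEdgeSet ((S.erase s(u, v)) : Set (Edge n))).Reachable u v := by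
        refine ⟨p.transfer _ fun ed hed => ?_⟩
        have h1 := p.edges_subset_edgeSet hed
        rw [hG, SimpleGraph.edgeSet_fromEdgeSet] at h1
        rw [SimpleGraph.edgeSet_fromEdgeSet]
        refine ⟨?_, h1.2⟩
        have hne' : ed ≠ s(u, v) := fun hh => hp (hh ▸ hed)
        push_cast
        exact Set.mem_diff_singleton.mpr ⟨by exact_mod_cast h1.1, hne'⟩ |>.1 |> fun hm =>
          by exact_mod_cast Finset.mem_coe.mpr (Finset.mem_erase.mpr ⟨hne', by exact_mod_cast h1.1⟩)
      have hconn' : (SimpleGraph.fromEdgeSet ((S.erase s(u, v)) : Set (Edge n))).Connected := by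
        apply connected_of_edges hconn
        intro a b hab hneab
        by_cases hcase : s(a, b) = s(u, v)
        · rcases Sym2.eq_iff.mp hcase with ⟨rfl, rfl⟩ | ⟨rfl, rfl⟩
          · exact hreach'
          · exact hreach'.symm
        · exact SimpleGraph.Adj.reachable (by
            rw [SimpleGraph.fromEdgeSet_adj]
            exact ⟨by exact_mod_cast Finset.mem_erase.mpr ⟨hcase, hab⟩, hneab⟩)
      have hcard' : (S.erase s(u, v)).card ≤ k := by
        rw [Finset.card_erase_of_mem heS]; omega
      have := ih (S.erase s(u, v)) hcard' hconn'
      have := Finset.card_erase_of_mem heS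
      omega


/-- The star centered at vertex `0`. -/
def starT (n : ℕ) [NeZero n] : Finset (Edge n) :=
  (Finset.univ.erase 0).image fun v => s((0 : Fin n), v)

lemma mem_starT {e : Edge n} : e ∈ starT n ↔ ∃ v : Fin n, v ≠ 0 ∧ e = s((0 : Fin n), v) := by
  simp only [starT, Finset.mem_image, Finset.mem_erase, Finset.mem_univ, and_true]
  exact ⟨fun ⟨v, hv, he⟩ => ⟨v, hv, he.symm⟩, fun ⟨v, hv, he⟩ => ⟨v, hv, he.symm⟩⟩

lemma starT_card : (starT n).card = n - 1 := by
  rw [starT, Finset.card_image_of_injective _ ?_, Finset.card_erase_of_mem (Finset.mem_univ _),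
    Finset.card_univ, Fintype.card_fin]
  intro a b hab
  rcases Sym2.eq_iff.mp hab with ⟨_, h⟩ | ⟨h1, h2⟩
  · exact h
  · rw [h2, ← h1]

lemma starT_ncst (hn : 3 ≤ n) : NCST (starT n) := by
  refine ⟨⟨?_, starT_card, ?_⟩, ?_⟩
  · rw [SimpleGraph.connected_iff]
    refine ⟨fun x y => ?_, ⟨0⟩⟩
    have key : ∀ z : Fin n, (SimpleGraph.fromEdgeSet ((starT n : Set (Edge n)))).Reachable z 0 := by
      intro z
      by_cases hz : z = 0
      · exact hz ▸ SimpleGraph.Reachable.refl _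
      · refine SimpleGraph.Adj.reachable ?_
        rw [SimpleGraph.fromEdgeSet_adj]
        exact ⟨by exact_mod_cast mem_starT.mpr ⟨z, hz, Sym2.eq_swap⟩, hz⟩
    exact (key x).trans (key y).symm
  · intro e he
    obtain ⟨v, hv, rfl⟩ := mem_starT.mp he
    simp [Sym2.mk_isDiag_iff, Ne.symm hv]
  · intro e he f hf hcr
    obtain ⟨v, hv, rfl⟩ := mem_starT.mp he
    obtain ⟨u, hu, rfl⟩ := mem_starT.mp hf
    have hv0 : (0 : Fin n) < v := (Fin.pos_iff_ne_zero' v).mpr hv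
    exact not_spans_zero (cross_zero hv0 hcr)



section AF2
variable {n : ℕ} [NeZero n]

/-- Number of edges at vertex `0`. -/
def deg0 (T : Finset (Edge n)) : ℕ := (T.filter fun e => (0 : Fin n) ∈ e).card

lemma flip_step {T : Finset (Edge n)} (hT : NCST T) {b : Fin n} (hb0 : b ≠ 0)
    (hbT : s((0 : Fin n), b) ∉ T) (hvis : ∀ f ∈ T, ¬ Spans f b) :
    ∃ T', Flip T T' ∧ deg0 T' = deg0 T + 1 := by
  classical
  obtain ⟨⟨hconn, hcard, hloop⟩, hnc⟩ := hT
  have hb0' : (0 : Fin n) < b := (Fin.pos_iff_ne_zero' b).mpr hb0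
  obtain ⟨w⟩ := hconn.preconnected b 0
  obtain ⟨p, hp⟩ := w.toPath
  cases p with
  | nil => exact absurd rfl hb0
  | @cons _ x _ hadj q =>
    rw [SimpleGraph.fromEdgeSet_adj] at hadj
    have hbx : b ≠ x := hadj.2
    have hxbT : s(x, b) ∈ T := by
      have := hadj.1
      rw [Sym2.eq_swap] at this
      exact_mod_cast this
    have hx0 : x ≠ 0 := by
      rintro rfl
      exact hbT hxbT
    have he'0 : (0 : Fin n) ∉ s(x, b) := by
      rw [Sym2.mem_iff]
      rintro (rfl | rfl)
      · exact hx0 rfl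
      · exact hb0 rfl
    have hne_e' : s((0 : Fin n), b) ≠ s(x, b) := by
      intro h
      exact hbT (h ▸ hxbT)
    have hnotin : s(x, b) ∉ q.edges := by
      have hnd := hp.isTrail.edges_nodup
      rw [SimpleGraph.Walk.edges_cons, List.nodup_cons] at hnd
      rw [Sym2.eq_swap]
      exact hnd.1
    set T' := insert (s((0 : Fin n), b)) (T.erase s(x, b)) with hT'def
    have hsub : ∀ f ∈ T', f = s((0 : Fin n), b) ∨ f ∈ T := by
      intro f hf
      rcases Finset.mem_insert.mp hf with h | h
      · exact Or.inl h
      · exact Or.inr (Finset.mem_of_mem_erase h)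
    have hnc' : NonCrossing T' := by
      intro e he f hf hcr
      rcases hsub e he with rfl | heT
      · rcases hsub f hf with rfl | hfT
        · exact not_spans_zero (cross_zero hb0' hcr)
        · exact hvis f hfT (cross_zero hb0' hcr)
      · rcases hsub f hf with rfl | hfT
        · exact hvis e heT (cross_zero hb0' (cross_symm hcr))
        · exact hnc e heT f hfT hcr
    have hcard' : T'.card = n - 1 := by
      rw [hT'def, Finset.card_insert_of_notMem, Finset.card_erase_of_mem hxbT, hcard]
      · have hn1 : 1 ≤ n - 1 := by
          have : T.Nonempty := ⟨_, hxbT⟩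
          have := Finset.card_pos.mpr this
          omega
        omega
      · intro h
        exact hbT (Finset.mem_of_mem_erase h)
    have hloop' : ∀ e ∈ T', ¬ e.IsDiag := by
      intro e he
      rcases hsub e he with rfl | heT
      · simp [Sym2.mk_isDiag_iff, hb0.symm]
      · exact hloop e heT
    have hadj0b : (SimpleGraph.fromEdgeSet (T' : Set (Edge n))).Adj 0 b := by
      rw [SimpleGraph.fromEdgeSet_adj]
      exact ⟨by exact_mod_cast Finset.mem_insert_self _ _, Ne.symm hb0⟩
    have hx0reach : (SimpleGraph.fromEdgeSet (T' : Set (Edge n))).Reachable x 0 := by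
      refine ⟨q.transfer _ fun ed hed => ?_⟩
      have h1 := q.edges_subset_edgeSet hed
      rw [SimpleGraph.edgeSet_fromEdgeSet] at h1 ⊢
      refine ⟨?_, h1.2⟩
      have hne' : ed ≠ s(x, b) := fun hh => hnotin (hh ▸ hed)
      have : ed ∈ T := by exact_mod_cast h1.1
      exact_mod_cast Finset.mem_insert_of_mem (Finset.mem_erase.mpr ⟨hne', this⟩)
    have hconn' : (SimpleGraph.fromEdgeSet (T' : Set (Edge n))).Connected := by
      apply connected_of_edges hconn
      intro a c hac hneac
      by_cases hcase : s(a, c) = s(x, b)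
      · have hxb : (SimpleGraph.fromEdgeSet (T' : Set (Edge n))).Reachable x b :=
          hx0reach.trans hadj0b.reachable
        rcases Sym2.eq_iff.mp hcase with ⟨rfl, rfl⟩ | ⟨rfl, rfl⟩
        · exact hxb
        · exact hxb.symm
      · refine SimpleGraph.Adj.reachable ?_
        rw [SimpleGraph.fromEdgeSet_adj]
        exact ⟨by exact_mod_cast Finset.mem_insert_of_mem (Finset.mem_erase.mpr ⟨hcase, hac⟩),
          hneac⟩
    refine ⟨T', ⟨⟨⟨hconn, hcard, hloop⟩, hnc⟩, ⟨⟨hconn', hcard', hloop'⟩, hnc'⟩,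
      s(x, b), hxbT, s((0 : Fin n), b), hbT, rfl⟩, ?_⟩
    rw [deg0, hT'def, Finset.filter_insert, if_pos (by simp [Sym2.mem_iff]),
      Finset.filter_erase, Finset.erase_eq_of_notMem (by
        intro h
        exact he'0 (Finset.mem_filter.mp h).2),
      Finset.card_insert_of_notMem (by
        intro h
        exact hbT (Finset.mem_filter.mp h).1)]
    rfl

end AF2


/-- Width of an edge, as the difference of endpoint indices. -/
def eWidth {n : ℕ} : Edge n → ℕ :=
  Sym2.lift ⟨fun a b => max a.val b.val - min a.val b.val, fun a b => by
    simp [max_comm, min_comm]⟩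

lemma eWidth_mk {n : ℕ} {a b : Fin n} (h : a < b) : eWidth s(a, b) = b.val - a.val := by
  have h' : a.val ≤ b.val := le_of_lt h
  simp [eWidth, max_eq_right h', min_eq_left h']

section AF3
variable {n : ℕ} [NeZero n]

lemma exists_visible {T : Finset (Edge n)} (hn : 3 ≤ n) (hT : NCST T) {v : Fin n}
    (hv : v ≠ 0) (hvT : s((0 : Fin n), v) ∉ T) :
    ∃ b : Fin n, b ≠ 0 ∧ s((0 : Fin n), b) ∉ T ∧ ∀ f ∈ T, ¬ Spans f b := by
  classical
  obtain ⟨⟨hconn, hcard, hloop⟩, hnc⟩ := hT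
  by_cases hvvis : ∀ f ∈ T, ¬ Spans f v
  · exact ⟨v, hv, hvT, hvvis⟩
  push_neg at hvvis
  obtain ⟨f₀, hf₀T, hf₀⟩ := hvvis
  set S : Finset (Edge n) :=
    T.filter (fun e => ∃ c d y : Fin n, e = s(c, d) ∧ 0 < c ∧ c < y ∧ y < d) with hSdef
  have hf₀S : f₀ ∈ S := by
    obtain ⟨c, d, hfe, hc, hcv, hvd⟩ := hf₀
    exact Finset.mem_filter.mpr ⟨hf₀T, ⟨c, d, v, hfe, hc, hcv, hvd⟩⟩
  obtain ⟨e₀, he₀S, hmax⟩ := S.exists_max_image eWidth ⟨f₀, hf₀S⟩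
  obtain ⟨he₀T, c, d, y, rfl, hc, hcy, hyd⟩ :
      ∃ (_ : e₀ ∈ T) (c d y : Fin n), e₀ = s(c, d) ∧ 0 < c ∧ c < y ∧ y < d := by
    have h := Finset.mem_filter.mp he₀S
    obtain ⟨c, d, y, he, hc, hcy, hyd⟩ := h.2
    exact ⟨h.1, c, d, y, he, hc, hcy, hyd⟩
  have hcd : c < d := hcy.trans hyd
  have hW₀ : eWidth s(c, d) = d.val - c.val := eWidth_mk hcd
  have hkey : ∀ c' d' : Fin n, s(c', d') ∈ T → 0 < c' → ∀ y' : Fin n, c' < y' → y' < d' →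
      d'.val - c'.val ≤ d.val - c.val := by
    intro c' d' hfT hc' y' hy1 hy2
    have hfS : s(c', d') ∈ S := Finset.mem_filter.mpr ⟨hfT, ⟨c', d', y', rfl, hc', hy1, hy2⟩⟩
    have h := hmax _ hfS
    rwa [hW₀, eWidth_mk (hy1.trans hy2)] at h
  have hcdv : c.val < d.val := hcd
  -- both endpoints of the widest wide edge are "visible"
  have hvisc : ∀ f ∈ T, ¬ Spans f c := by
    rintro f hf ⟨c', d', rfl, hc', h1, h2⟩
    have v1 : c'.val < c.val := h1
    have v2 : c.val < d'.val := h2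
    rcases lt_trichotomy d' d with hlt | heq | hgt
    · exact hnc _ hf s(c, d) he₀T
        ⟨c', d', c, d, rfl, rfl, h1.trans h2, hcd, Or.inl ⟨h1, h2, hlt⟩⟩
    · have hk := hkey c' d' hf hc' c h1 h2
      have hv : d'.val = d.val := congrArg Fin.val heq
      omega
    · have hk := hkey c' d' hf hc' c h1 h2
      have hv : d.val < d'.val := hgt
      omega
  have hvisd : ∀ f ∈ T, ¬ Spans f d := by
    rintro f hf ⟨c', d', rfl, hc', h1, h2⟩
    have v1 : c'.val < d.val := h1
    have v2 : d.val < d'.val := h2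
    rcases lt_trichotomy c' c with hlt | heq | hgt
    · have hk := hkey c' d' hf hc' d h1 h2
      have hv : c'.val < c.val := hlt
      omega
    · have hk := hkey c' d' hf hc' d h1 h2
      have hv : c'.val = c.val := congrArg Fin.val heq
      omega
    · exact hnc s(c, d) he₀T _ hf
        ⟨c, d, c', d', rfl, rfl, hcd, h1.trans h2, Or.inl ⟨hgt, h1, h2⟩⟩
  have hc0 : c ≠ 0 := fun h => absurd (h ▸ hc) (lt_irrefl _)
  have hd0 : d ≠ 0 := fun h => absurd (h ▸ (hc.trans hcd)) (lt_irrefl _)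
  by_cases hcn : s((0 : Fin n), c) ∈ T
  · by_cases hdn : s((0 : Fin n), d) ∈ T
    · exfalso
      -- triangle 0-c-d : contradiction with the edge count of a connected graph
      have hne1 : s((0 : Fin n), c) ≠ s(c, d) := by
        intro h
        rcases Sym2.eq_iff.mp h with ⟨h1, _⟩ | ⟨h1, h2⟩
        · exact hc0 h1.symm
        · exact hd0 h1.symm
      have hne2 : s((0 : Fin n), d) ≠ s(c, d) := by
        intro h
        rcases Sym2.eq_iff.mp h with ⟨h1, _⟩ | ⟨h1, _⟩
        · exact hc0 h1.symm
        · exact hd0 h1.symm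
      have hconn' : (SimpleGraph.fromEdgeSet ((T.erase s(c, d)) : Set (Edge n))).Connected := by
        apply connected_of_edges hconn
        intro a b hab hneab
        by_cases hcase : s(a, b) = s(c, d)
        · have hr1 : (SimpleGraph.fromEdgeSet ((T.erase s(c, d)) : Set (Edge n))).Adj c 0 := by
            rw [SimpleGraph.fromEdgeSet_adj]
            constructor
            · have : s(c, (0 : Fin n)) = s((0 : Fin n), c) := Sym2.eq_swap
              rw [this]
              exact_mod_cast Finset.mem_erase.mpr ⟨hne1, hcn⟩
            · exact hc0
          have hr2 : (SimpleGraph.fromEdgeSet ((T.erase s(c, d)) : Set (Edge n))).Adj 0 d := by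
            rw [SimpleGraph.fromEdgeSet_adj]
            exact ⟨by exact_mod_cast Finset.mem_erase.mpr ⟨hne2, hdn⟩, Ne.symm hd0⟩
          have hcdreach : (SimpleGraph.fromEdgeSet
              ((T.erase s(c, d)) : Set (Edge n))).Reachable c d :=
            hr1.reachable.trans hr2.reachable
          rcases Sym2.eq_iff.mp hcase with ⟨rfl, rfl⟩ | ⟨rfl, rfl⟩
          · exact hcdreach
          · exact hcdreach.symm
        · exact SimpleGraph.Adj.reachable (by
            rw [SimpleGraph.fromEdgeSet_adj]
            exact ⟨by exact_mod_cast Finset.mem_erase.mpr ⟨hcase, hab⟩, hneab⟩)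
      have hge := card_ge_of_connected (T.erase s(c, d)).card (T.erase s(c, d)) le_rfl hconn'
      rw [Finset.card_erase_of_mem he₀T, hcard] at hge
      omega
    · exact ⟨d, hd0, hdn, hvisd⟩
  · exact ⟨c, hc0, hcn, hvisc⟩

end AF3


section AF4
variable {n : ℕ} [NeZero n]

lemma flip_symm {T T' : Finset (Edge n)} (h : Flip T T') : Flip T' T := by
  obtain ⟨h1, h2, e, he, f, hf, rfl⟩ := h
  refine ⟨h2, h1, f, Finset.mem_insert_self _ _, e, ?_, ?_⟩
  · intro hmem
    rcases Finset.mem_insert.mp hmem with rfl | hmem'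
    · exact hf he
    · exact (Finset.mem_erase.mp hmem').1 rfl
  · rw [Finset.erase_insert (fun hmem => hf (Finset.mem_of_mem_erase hmem)),
      Finset.insert_erase he]

lemma flipSeq_reverse {T₁ T₂ : Finset (Edge n)} {k : ℕ} (h : FlipSeq T₁ T₂ k) :
    FlipSeq T₂ T₁ k := by
  obtain ⟨f, h0, hk, hf⟩ := h
  refine ⟨fun i => f (k - i), by simpa using hk, by simpa using h0, ?_⟩
  intro i hi
  have h1 : k - i = (k - (i + 1)) + 1 := by omega
  simp only [h1]
  exact flip_symm (hf (k - (i + 1)) (by omega))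

lemma flipSeq_trans {T₁ T₂ T₃ : Finset (Edge n)} {k₁ k₂ : ℕ}
    (h : FlipSeq T₁ T₂ k₁) (h' : FlipSeq T₂ T₃ k₂) : FlipSeq T₁ T₃ (k₁ + k₂) := by
  obtain ⟨f, hf0, hfk, hf⟩ := h
  obtain ⟨g, hg0, hgk, hg⟩ := h'
  refine ⟨fun i => if i ≤ k₁ then f i else g (i - k₁), by simp [hf0], ?_, ?_⟩
  · by_cases h : k₂ = 0
    · subst h
      simp only [Nat.add_zero, if_pos le_rfl, hfk]
      exact hg0.symm.trans hgk
    · simp only [if_neg (by omega : ¬ k₁ + k₂ ≤ k₁)]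
      have e1 : k₁ + k₂ - k₁ = k₂ := by omega
      rw [e1, hgk]
  · intro i hi
    by_cases h1 : i < k₁
    · simp only [if_pos (by omega : i ≤ k₁), if_pos (by omega : i + 1 ≤ k₁)]
      exact hf i h1
    · by_cases h2 : i = k₁
      · subst h2
        simp only [if_pos le_rfl, if_neg (by omega : ¬ i + 1 ≤ i)]
        have e1 : i + 1 - i = 1 := by omega
        rw [e1, hfk, ← hg0]
        exact hg 0 (by omega)
      · have h3 : k₁ < i := by omega
        simp only [if_neg (by omega : ¬ i ≤ k₁), if_neg (by omega : ¬ i + 1 ≤ k₁)]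
        have e1 : i + 1 - k₁ = (i - k₁) + 1 := by omega
        rw [e1]
        exact hg (i - k₁) (by omega)

lemma deg0_pos (hn : 3 ≤ n) {T : Finset (Edge n)} (hT : NCST T) : 1 ≤ deg0 T := by
  classical
  obtain ⟨⟨hconn, hcard, hloop⟩, _⟩ := hT
  obtain ⟨w⟩ := hconn.preconnected 0 ⟨1, by omega⟩
  cases w with
  | cons hadj _ =>
    rw [SimpleGraph.fromEdgeSet_adj] at hadj
    refine Finset.card_pos.mpr ⟨_, Finset.mem_filter.mpr ⟨by exact_mod_cast hadj.1, ?_⟩⟩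
    exact Sym2.mem_mk_left _ _

lemma to_star (hn : 3 ≤ n) : ∀ (m : ℕ) (T : Finset (Edge n)), NCST T →
    n - 1 ≤ deg0 T + m → ∃ k ≤ m, FlipSeq T (starT n) k := by
  intro m
  induction m with
  | zero =>
    intro T hT hdeg
    rw [deg0] at hdeg
    have hcard := hT.1.2.1
    have hle : deg0 T ≤ T.card := Finset.card_filter_le _ _
    have hfeq : T.filter (fun e => (0 : Fin n) ∈ e) = T := by
      apply Finset.eq_of_subset_of_card_le (Finset.filter_subset _ _)
      rw [hcard]; omega
    have hall : ∀ e ∈ T, (0 : Fin n) ∈ e := by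
      intro e he
      have : e ∈ T.filter (fun e => (0 : Fin n) ∈ e) := by rw [hfeq]; exact he
      exact (Finset.mem_filter.mp this).2
    have hsub : T ⊆ starT n := by
      intro e he
      have h0 := hall e he
      have hnd := hT.1.2.2 e he
      induction e using Sym2.ind with
      | _ a b =>
        rw [Sym2.mem_iff] at h0
        have hab : a ≠ b := fun h => hnd (by simp [h])
        rcases h0 with rfl | rfl
        · exact mem_starT.mpr ⟨b, Ne.symm hab, rfl⟩
        · exact mem_starT.mpr ⟨a, hab, Sym2.eq_swap⟩
    have hTeq : T = starT n := by
      apply Finset.eq_of_subset_of_card_le hsub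
      rw [starT_card, hcard]
    exact ⟨0, le_rfl, fun _ => T, rfl, hTeq.symm ▸ rfl, fun i hi => absurd hi (by omega)⟩
  | succ m ih =>
    intro T hT hdeg
    by_cases hTs : T = starT n
    · exact ⟨0, by omega, fun _ => T, rfl, hTs ▸ rfl, fun i hi => absurd hi (by omega)⟩
    · have hex : ∃ v : Fin n, v ≠ 0 ∧ s((0 : Fin n), v) ∉ T := by
        by_contra hcon
        push_neg at hcon
        have hsub : starT n ⊆ T := by
          intro e he
          obtain ⟨v, hv, rfl⟩ := mem_starT.mp he
          exact hcon v hv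
        exact hTs (Finset.eq_of_subset_of_card_le hsub (by rw [starT_card, hT.1.2.1])).symm
      obtain ⟨v, hv, hvT⟩ := hex
      obtain ⟨b, hb0, hbT, hvis⟩ := exists_visible hn hT hv hvT
      obtain ⟨T', hF, hdeg'⟩ := flip_step hT hb0 hbT hvis
      obtain ⟨k, hk, f, hf0, hfk, hf⟩ := ih T' hF.2.1 (by omega)
      refine ⟨k + 1, by omega, fun i => if i = 0 then T else f (i - 1), if_pos rfl, ?_, ?_⟩
      · show (if k + 1 = 0 then T else f (k + 1 - 1)) = starT n
        rw [if_neg (by omega), Nat.add_sub_cancel, hfk]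
      · intro i hi
        by_cases h0 : i = 0
        · subst h0
          simp only [if_pos rfl, if_neg (by omega : ¬ (0 : ℕ) + 1 = 0)]
          simpa [hf0] using hF
        · obtain ⟨j, rfl⟩ := Nat.exists_eq_succ_of_ne_zero h0
          simp only [if_neg (by omega : ¬ j + 1 = 0), if_neg (by omega : ¬ j + 1 + 1 = 0),
            Nat.add_sub_cancel]
          exact hf j (by omega)

end AF4


/-- Avis–Fukuda: between any two non-crossing spanning trees on `n ≥ 3` points in convex
position there is a flip sequence of length at most `2n - 4`. -/
theorem avis_fukuda {n : ℕ} (hn : 3 ≤ n) (T₁ T₂ : Finset (Edge n))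
    (h₁ : NCST T₁) (h₂ : NCST T₂) : FlipDistLE T₁ T₂ (2 * n - 4) := by
  haveI : NeZero n := ⟨by omega⟩
  obtain ⟨k₁, hk₁, hs₁⟩ := to_star hn (n - 2) T₁ h₁ (by have := deg0_pos hn h₁; omega)
  obtain ⟨k₂, hk₂, hs₂⟩ := to_star hn (n - 2) T₂ h₂ (by have := deg0_pos hn h₂; omega)
  exact ⟨k₁ + k₂, by omega, flipSeq_trans hs₁ (flipSeq_reverse hs₂)⟩
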